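/- arXiv:1310.2703 — 3 statements merged into one kernel-verified Lean document; each statement's English description precedes it below -/
import Mathlib

section
/- The user rate equals the negative logarithm of the minimum mean square error: log(1 + SINR) = −log(mse(μ*)), where μ* = conj(a_n)/c, c = Σ_{m=1}^N |a_m|² + σ², and SINR = |a_n|²/(Σ_{m≠n} |a_m|² + σ²). -/
/-- the user rate equals the negative logarithm of the minimum MSE:
`log(1 + SINR) = −log(mse μ*)`. -/
theorem rate_eq_neg_log_mmse
    {M N : ℕ} (h : EuclideanSpace ℂ (Fin M)) (w : Fin N → EuclideanSpace ℂ (Fin M))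
    (σsq : ℝ) (hσ : 0 < σsq) (n : Fin N)
    (a : Fin N → ℂ) (ha : ∀ m, a m = (inner ℂ h (w m) : ℂ))
    (mse : ℂ → ℝ)
    (hmse : ∀ μ : ℂ, mse μ =
      ‖μ‖ ^ 2 * ∑ m ∈ Finset.univ.erase n, ‖a m‖ ^ 2
        + ‖μ‖ ^ 2 * σsq + ‖1 - μ * a n‖ ^ 2)
    (c : ℝ) (hc : c = ∑ m, ‖a m‖ ^ 2 + σsq)
    (SINR : ℝ)
    (hSINR : SINR = ‖a n‖ ^ 2 / (∑ m ∈ Finset.univ.erase n, ‖a m‖ ^ 2 + σsq)) :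
    Real.log (1 + SINR) = - Real.log (mse ((starRingEnd ℂ) (a n) / (c : ℂ))) := by
  set S : ℝ := ∑ m ∈ Finset.univ.erase n, ‖a m‖ ^ 2 with hS
  have hSnn : 0 ≤ S := Finset.sum_nonneg fun m _ => sq_nonneg _
  have hI : 0 < S + σsq := by linarith
  have hcval : c = ‖a n‖ ^ 2 + S + σsq := by
    rw [hc, ← Finset.add_sum_erase _ _ (Finset.mem_univ n), add_assoc]
  have hc0 : 0 < c := by nlinarith [sq_nonneg ‖a n‖]
  have hcval' : c = ‖a n‖ ^ 2 + S + σsq := hcval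
  have hcC : ((c : ℂ)) ≠ 0 := by exact_mod_cast hc0.ne'
  have hnorm1 : ‖(starRingEnd ℂ) (a n) / (c : ℂ)‖ = ‖a n‖ / c := by
    rw [norm_div, RCLike.norm_conj, Complex.norm_real, Real.norm_of_nonneg hc0.le]
  have hterm : (1 : ℂ) - (starRingEnd ℂ) (a n) / (c : ℂ) * a n
      = (((S + σsq) / c : ℝ) : ℂ) := by
    have h2 : (starRingEnd ℂ) (a n) * a n = ((‖a n‖ ^ 2 : ℝ) : ℂ) := by
      rw [mul_comm, Complex.mul_conj, Complex.normSq_eq_norm_sq]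
    field_simp
    rw [mul_comm ((starRingEnd ℂ) (a n)) (a n), mul_comm (a n), h2]
    rw [hcval] at hcC ⊢; push_cast at hcC ⊢; field_simp; ring
  have hnorm2 : ‖(1 : ℂ) - (starRingEnd ℂ) (a n) / (c : ℂ) * a n‖ = (S + σsq) / c := by
    rw [hterm, Complex.norm_real, Real.norm_of_nonneg (div_pos hI hc0).le]
  have key : mse ((starRingEnd ℂ) (a n) / (c : ℂ)) = (S + σsq) / c := by
    rw [hmse, hnorm1, hnorm2]
    field_simp
    rw [hcval']; ring
  rw [hSINR, key]
  have h1 : 1 + ‖a n‖ ^ 2 / (S + σsq) = c / (S + σsq) := by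
    field_simp; linarith [hcval']
  rw [h1, Real.log_div hc0.ne' hI.ne', Real.log_div hI.ne' hc0.ne']
  ring
end

section
/- The user rate admits the variational characterization log(1 + SINR) = sup over μ ∈ ℂ and s > 0 of (−s·mse(μ) + log s + 1), and the supremum is attained at μ = μ* = conj(a_n)/c and s = 1/mse(μ*), where c = Σ_{m=1}^N |a_m|² + σ² and SINR = |a_n|²/(Σ_{m≠n} |a_m|² + σ²). -/
/-- the variational characterization of the user rate:
`log(1 + SINR) = sup_{μ ∈ ℂ, s > 0} (−s·mse(μ) + log s + 1)`, and the supremum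
is attained at `μ = μ* = conj(a_n)/c` and `s = 1/mse(μ*)`. -/
theorem rate_variational_characterization
    {M N : ℕ} (h : EuclideanSpace ℂ (Fin M)) (w : Fin N → EuclideanSpace ℂ (Fin M))
    (σsq : ℝ) (hσ : 0 < σsq) (n : Fin N)
    (a : Fin N → ℂ) (ha : ∀ m, a m = (inner ℂ h (w m) : ℂ))
    (mse : ℂ → ℝ)
    (hmse : ∀ μ : ℂ, mse μ =
      ‖μ‖ ^ 2 * ∑ m ∈ Finset.univ.erase n, ‖a m‖ ^ 2
        + ‖μ‖ ^ 2 * σsq + ‖1 - μ * a n‖ ^ 2)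
    (c : ℝ) (hc : c = ∑ m, ‖a m‖ ^ 2 + σsq)
    (SINR : ℝ)
    (hSINR : SINR = ‖a n‖ ^ 2 / (∑ m ∈ Finset.univ.erase n, ‖a m‖ ^ 2 + σsq))
    (μstar : ℂ) (hμstar : μstar = (starRingEnd ℂ) (a n) / (c : ℂ))
    (sstar : ℝ) (hsstar : sstar = 1 / mse μstar) :
    Real.log (1 + SINR)
        = sSup {y : ℝ | ∃ μ : ℂ, ∃ s : ℝ, 0 < s ∧ y = -s * mse μ + Real.log s + 1} ∧
    (∀ μ : ℂ, ∀ s : ℝ, 0 < s →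
        -s * mse μ + Real.log s + 1 ≤ Real.log (1 + SINR)) ∧
    Real.log (1 + SINR) = -sstar * mse μstar + Real.log sstar + 1 := by
  have hn2 : ∀ z : ℂ, ‖z‖ ^ 2 = Complex.normSq z := fun z => by
    rw [← Complex.sq_norm]
  set I : ℝ := ∑ m ∈ Finset.univ.erase n, ‖a m‖ ^ 2 + σsq with hIdef
  have hI : 0 < I :=
    add_pos_of_nonneg_of_pos (Finset.sum_nonneg fun m _ => by positivity) hσ
  have hcI : c = ‖a n‖ ^ 2 + I := by
    rw [hc, ← Finset.add_sum_erase _ _ (Finset.mem_univ n), hIdef]; ring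
  have hcpos : 0 < c := by rw [hcI]; positivity
  have hcne : (c : ℂ) ≠ 0 := by exact_mod_cast hcpos.ne'
  -- the key algebraic identity
  have key : ∀ μ : ℂ, mse μ = c * ‖μ - μstar‖ ^ 2 + I / c := by
    intro μ
    have hms : μ - μstar = (μ * (c : ℂ) - (starRingEnd ℂ) (a n)) / (c : ℂ) := by
      rw [hμstar]; field_simp
    have hns : ‖μ - μstar‖ ^ 2
        = Complex.normSq (μ * (c : ℂ) - (starRingEnd ℂ) (a n)) / (c * c) := by
      rw [hms, hn2, Complex.normSq_div, Complex.normSq_ofReal]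
    have hA : (∑ m ∈ Finset.univ.erase n, ‖a m‖ ^ 2) = I - σsq := by
      rw [hIdef]; ring
    have hc' : c = Complex.normSq (a n) + I := by rw [hcI, hn2]
    rw [hmse, hns, hA, hn2, hn2]
    field_simp
    rw [hc']
    simp only [Complex.normSq_apply, Complex.mul_re, Complex.mul_im, Complex.sub_re,
      Complex.sub_im, Complex.one_re, Complex.one_im, Complex.ofReal_re, Complex.ofReal_im,
      Complex.conj_re, Complex.conj_im]
    ring
  have hmstar : mse μstar = I / c := by
    rw [key]; simp
  have hmpos : 0 < mse μstar := by rw [hmstar]; positivity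
  have hss : sstar = c / I := by
    rw [hsstar, hmstar, one_div_div]
  have hsspos : 0 < sstar := by rw [hss]; positivity
  have hlog : Real.log (1 + SINR) = Real.log (c / I) := by
    congr 1
    rw [hSINR, hcI]
    field_simp
    ring
  have hbound : ∀ μ : ℂ, ∀ s : ℝ, 0 < s →
      -s * mse μ + Real.log s + 1 ≤ Real.log (1 + SINR) := by
    intro μ s hs
    have h1 : I / c ≤ mse μ := by
      have := mul_nonneg hcpos.le (sq_nonneg ‖μ - μstar‖)
      rw [key]; linarith
    have h2 : Real.log (s * (I / c)) ≤ s * (I / c) - 1 :=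
      Real.log_le_sub_one_of_pos (by positivity)
    rw [Real.log_mul hs.ne' (by positivity), Real.log_div hI.ne' hcpos.ne'] at h2
    rw [hlog, Real.log_div hcpos.ne' hI.ne']
    have h3 : s * (I / c) ≤ s * mse μ := mul_le_mul_of_nonneg_left h1 hs.le
    linarith
  have heq : Real.log (1 + SINR) = -sstar * mse μstar + Real.log sstar + 1 := by
    rw [hlog, hmstar, hss]
    have h4 : -(c / I) * (I / c) = -1 := by field_simp
    rw [h4]; ring
  refine ⟨?_, hbound, heq⟩
  apply le_antisymm
  · exact le_csSup ⟨Real.log (1 + SINR), by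
      rintro y ⟨μ, s, hs, rfl⟩; exact hbound μ s hs⟩ ⟨μstar, sstar, hsspos, heq⟩
  · exact csSup_le ⟨_, μstar, sstar, hsspos, heq⟩ (by
      rintro y ⟨μ, s, hs, rfl⟩; exact hbound μ s hs)
end

section
/- Let S be a nonempty set, I a nonempty finite index set, and N_n, D_n : S → ℝ with D_n(x) > 0 for all n ∈ I, x ∈ S. Suppose η ∈ ℝ and x* ∈ S satisfy min_{n∈I} (N_n(x*) − η·D_n(x*)) = 0 and min_{n∈I} (N_n(x) − η·D_n(x)) ≤ 0 for every x ∈ S. Then min_{n∈I} N_n(x*)/D_n(x*) = η and min_{n∈I} N_n(x)/D_n(x) ≤ η for every x ∈ S; that is, x* maximizes the fractional objective and η is its optimal value. -/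
/-- converse Dinkelbach direction: if `x*` attains the parametric
problem at parameter `η` with optimal value `0`, then `x*` maximizes the
fractional objective and `η` is its optimal value. -/
theorem dinkelbach_converse
    {S ι : Type*} [Nonempty S] [Fintype ι] [Nonempty ι]
    (N D : ι → S → ℝ) (hD : ∀ n x, 0 < D n x)
    (η : ℝ) (xstar : S)
    (hzero : (Finset.univ.inf' Finset.univ_nonempty
        fun n => N n xstar - η * D n xstar) = 0)
    (hopt : ∀ x : S,
      (Finset.univ.inf' Finset.univ_nonempty fun n => N n x - η * D n x) ≤ 0) :
    (Finset.univ.inf' Finset.univ_nonempty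
        fun n => N n xstar / D n xstar) = η ∧
    (∀ x : S,
      (Finset.univ.inf' Finset.univ_nonempty fun n => N n x / D n x) ≤ η) := by
  have key : ∀ x : S,
      (Finset.univ.inf' Finset.univ_nonempty fun n => N n x / D n x) ≤ η := by
    intro x
    obtain ⟨n, hn, hne⟩ := Finset.exists_mem_eq_inf' (Finset.univ_nonempty)
      (fun n => N n x - η * D n x)
    have h1 : N n x - η * D n x ≤ 0 := by
      have := hopt x; rw [hne] at this; exact this
    have h2 : N n x / D n x ≤ η := by
      rw [div_le_iff₀ (hD n x)]; linarith
    exact le_trans (Finset.inf'_le _ (Finset.mem_univ n)) h2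
  refine ⟨le_antisymm (key xstar) ?_, key⟩
  apply Finset.le_inf'
  intro n _
  have h1 : 0 ≤ N n xstar - η * D n xstar := by
    rw [← hzero]; exact Finset.inf'_le _ (Finset.mem_univ n)
  rw [le_div_iff₀ (hD n xstar)]; linarith
end
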